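/- Let k ⊆ L ⊆ K be purely inseparable field extensions of characteristic p > 0 with K/k of finite exponent. If B_L is an r-basis of L/k and B_K is an r-basis of K/k, then |B_L| ≤ |B_K|. -/

import Mathlib

open IntermediateField

variable (p : ℕ) (k K : Type*) [Field k] [Field K] [Algebra k K]

/-- `B` is an r-basis of the intermediate field `E` over `k`: since the extensions involved
have finite exponent, this is a minimal generating set of `E` over `k`. -/
def IsRBasisOf (E : IntermediateField k K) (B : Set K) : Prop :=
  B ⊆ (E : Set K) ∧ IntermediateField.adjoin k B = E ∧
    ∀ x ∈ B, x ∉ IntermediateField.adjoin k (B \ {x})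

namespace RB

open Polynomial Module

variable {p k K}

lemma adjoin_coe_union (T S : Set K) :
    adjoin k (↑(adjoin k T) ∪ S) = adjoin k (T ∪ S) := by
  apply le_antisymm
  · rw [adjoin_le_iff]
    apply Set.union_subset
    · exact adjoin_le_iff.mpr (Set.subset_union_left.trans (subset_adjoin k _))
    · exact Set.subset_union_right.trans (subset_adjoin k _)
  · exact adjoin.mono _ _ _ (Set.union_subset_union_left S (subset_adjoin k T))

lemma adjoin_union_coe (S T : Set K) :
    adjoin k (S ∪ ↑(adjoin k T)) = adjoin k (S ∪ T) := by
  rw [Set.union_comm, adjoin_coe_union, Set.union_comm]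

lemma adjoin_coe (F : IntermediateField k K) : adjoin k (F : Set K) = F :=
  le_antisymm (adjoin_le_iff.mpr le_rfl) (subset_adjoin k _)

lemma pow_mem_adjoin_pow (hp : p.Prime) [CharP K p] (S : Set K) {x : K}
    (hx : x ∈ adjoin k S) : x ^ p ∈ adjoin k ((· ^ p) '' S) := by
  haveI : Fact p.Prime := ⟨hp⟩
  induction hx using adjoin_induction with
  | mem y hy => exact subset_adjoin k _ ⟨y, hy, rfl⟩
  | algebraMap y => rw [← map_pow]; exact IntermediateField.algebraMap_mem _ _
  | add x y hx hy ihx ihy => rw [add_pow_char]; exact add_mem ihx ihy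
  | inv x hx ihx => rw [inv_pow]; exact inv_mem ihx
  | mul x y hx hy ihx ihy => rw [mul_pow]; exact mul_mem ihx ihy

/-- Exponent-reduction: if `E ⊆ k(S ∪ E^p)` and `K/k` has exponent `e`, then `E ⊆ k(S)`. -/
lemma le_adjoin_of_le_adjoin_union_pow (hp : p.Prime) [CharP K p] {e : ℕ}
    (he : ∀ x : K, x ^ p ^ e ∈ (⊥ : IntermediateField k K))
    (E : IntermediateField k K) (S : Set K)
    (hgen : E ≤ adjoin k (S ∪ (· ^ p) '' (E : Set K))) :
    E ≤ adjoin k S := by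
  have key : ∀ i : ℕ, E ≤ adjoin k (S ∪ (· ^ p ^ i) '' (E : Set K)) := by
    intro i
    induction i with
    | zero =>
        refine le_trans ?_ (adjoin.mono _ _ _ Set.subset_union_right)
        intro x hx
        exact subset_adjoin k _ ⟨x, hx, by simp⟩
    | succ i ih =>
        refine hgen.trans ?_
        rw [adjoin_le_iff]
        apply Set.union_subset
        · exact (subset_adjoin k _).trans (by exact_mod_cast le_of_eq rfl) |>.trans
            (SetLike.coe_subset_coe.mpr (adjoin.mono _ _ _ (Set.subset_union_left)))
        · rintro _ ⟨y, hy, rfl⟩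
          have hy' : y ∈ adjoin k (S ∪ (· ^ p ^ i) '' (E : Set K)) := ih hy
          have := pow_mem_adjoin_pow hp _ hy'
          refine SetLike.le_def.mp ?_ this
          rw [adjoin_le_iff, Set.image_union, Set.image_image]
          apply Set.union_subset
          · rintro _ ⟨s, hs, rfl⟩
            exact pow_mem (subset_adjoin k _ (Set.mem_union_left _ hs)) p
          · rintro _ ⟨y', hy', rfl⟩
            refine subset_adjoin k _ (Set.mem_union_right _ ⟨y', hy', ?_⟩)
            simp only []
            rw [← pow_mul, ← pow_succ]
  refine (key e).trans ?_
  rw [adjoin_le_iff]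
  apply Set.union_subset
  · exact subset_adjoin k _
  · rintro _ ⟨y, hy, rfl⟩
    exact SetLike.le_def.mp bot_le (he y)

/-- An r-basis is relatively `p`-independent. -/
lemma rbasis_pind (hp : p.Prime) [CharP K p] {e : ℕ}
    (he : ∀ x : K, x ^ p ^ e ∈ (⊥ : IntermediateField k K))
    {E : IntermediateField k K} {B : Set K} (hBE : B ⊆ (E : Set K))
    (hgen : adjoin k B = E) (hmin : ∀ x ∈ B, x ∉ adjoin k (B \ {x})) :
    ∀ x ∈ B, x ∉ adjoin k ((B \ {x}) ∪ (· ^ p) '' (E : Set K)) := by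
  intro x hx hmem
  have hsub : B ⊆ (adjoin k ((B \ {x}) ∪ (· ^ p) '' (E : Set K)) : Set K) := by
    intro y hy
    by_cases hyx : y = x
    · rw [hyx]; exact hmem
    · exact subset_adjoin _ _ (Or.inl ⟨hy, hyx⟩)
  have hgen' : E ≤ adjoin k ((B \ {x}) ∪ (· ^ p) '' (E : Set K)) := by
    conv_lhs => rw [← hgen]
    exact adjoin_le_iff.mpr hsub
  have hred := le_adjoin_of_le_adjoin_union_pow hp he E _ hgen'
  exact hmin x hx (hred (hBE hx))

set_option maxHeartbeats 1000000 in
lemma relfinrank_adjoin_simple (hp : p.Prime) [CharP K p] (F : IntermediateField k K) {b : K}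
    (hb : b ∉ F) (hbp : b ^ p ∈ F) :
    relfinrank F (adjoin k ((F : Set K) ∪ {b})) = p := by
  haveI : Fact p.Prime := ⟨hp⟩
  set B := adjoin k ((F : Set K) ∪ {b}) with hBdef
  have hFB : F ≤ B := fun x hx => subset_adjoin _ _ (Or.inl hx)
  rw [relfinrank_eq_finrank_of_le hFB]
  have hEq : extendScalars hFB = adjoin (↥F) {b} := by
    apply le_antisymm
    · rw [extendScalars_le_iff, hBdef, adjoin_le_iff]
      apply Set.union_subset
      · intro x hx
        have h1 : algebraMap (↥F) K ⟨x, hx⟩ ∈ adjoin (↥F) {b} := IntermediateField.algebraMap_mem _ _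
        have h2 : algebraMap (↥F) K ⟨x, hx⟩ = x := rfl
        rw [h2] at h1
        show x ∈ (adjoin (↥F) {b}).restrictScalars k
        rwa [mem_restrictScalars]
      · intro x hx
        rw [Set.mem_singleton_iff] at hx
        show x ∈ (adjoin (↥F) {b}).restrictScalars k
        rw [mem_restrictScalars, hx]
        exact subset_adjoin _ _ rfl
    · rw [adjoin_le_iff]
      intro x hx
      rw [Set.mem_singleton_iff] at hx
      show x ∈ extendScalars hFB
      rw [mem_extendScalars, hx]
      exact subset_adjoin _ _ (Or.inr rfl)
  rw [hEq]
  set c : ↥F := ⟨b ^ p, hbp⟩ with hc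
  have hmonic : (X ^ p - C c).Monic := monic_X_pow_sub_C _ hp.ne_zero
  have haev : Polynomial.aeval b (X ^ p - C c) = 0 := by
    have : (algebraMap (↥F) K) c = b ^ p := rfl
    simp [this]
  have hint : IsIntegral (↥F) b := ⟨_, hmonic, haev⟩
  have hirr : Irreducible (X ^ p - C c) := by
    apply X_pow_sub_C_irreducible_of_prime hp
    intro y hy
    apply hb
    have h1 : (y : K) ^ p = b ^ p := by
      have := congrArg (Subtype.val) hy
      simpa using this
    have h2 : ((y : K) - b) ^ p = 0 := by
      rw [sub_pow_char, h1, sub_self]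
    have h3 : (y : K) = b := by
      have h4 := pow_eq_zero_iff hp.ne_zero |>.mp h2
      exact sub_eq_zero.mp h4
    rw [← h3]
    exact y.2
  rw [IntermediateField.adjoin.finrank hint, ← minpoly.eq_of_irreducible_of_monic hirr haev hmonic,
    natDegree_X_pow_sub_C]

lemma chain (hp : p.Prime) [CharP K p] (F : IntermediateField k K) (S : Finset K)
    (hSp : ∀ x ∈ S, x ^ p ∈ F)
    (hind : ∀ x ∈ S, x ∉ adjoin k (((S : Set K) \ {x}) ∪ (F : Set K))) :
    relfinrank F (adjoin k ((S : Set K) ∪ (F : Set K))) = p ^ S.card := by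
  classical
  induction S using Finset.induction with
  | empty => simp [adjoin_coe]
  | @insert a S ha ih =>
      set B0 := adjoin k ((S : Set K) ∪ (F : Set K)) with hB0
      have hFB0 : F ≤ B0 := fun x hx => subset_adjoin _ _ (Or.inr hx)
      have hmono : ∀ x : K, adjoin k (((S : Set K) \ {x}) ∪ (F : Set K)) ≤
          adjoin k (((insert a S : Finset K) : Set K) \ {x} ∪ (F : Set K)) := by
        intro x
        apply adjoin.mono
        apply Set.union_subset_union_left
        apply Set.diff_subset_diff_left
        simp [Set.subset_insert]
      have hic : relfinrank F B0 = p ^ S.card := by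
        apply ih
        · intro x hx; exact hSp x (Finset.mem_insert_of_mem hx)
        · intro x hx hmem
          exact hind x (Finset.mem_insert_of_mem hx) (hmono x hmem)
      have hB0le : B0 ≤ adjoin k (((insert a S : Finset K) : Set K) \ {a} ∪ (F : Set K)) := by
        apply adjoin.mono
        apply Set.union_subset_union_left
        intro x hx
        simp only [Finset.coe_insert, Set.mem_diff, Set.mem_insert_iff, Set.mem_singleton_iff]
        exact ⟨Or.inr hx, fun hxa => ha (hxa ▸ hx)⟩
      have ha' : a ∉ B0 := fun h => hind a (Finset.mem_insert_self a S) (hB0le h)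
      have hap : a ^ p ∈ B0 := hFB0 (hSp a (Finset.mem_insert_self a S))
      have hstep : relfinrank B0 (adjoin k ((B0 : Set K) ∪ {a})) = p :=
        relfinrank_adjoin_simple hp B0 ha' hap
      have hBeq : adjoin k ((B0 : Set K) ∪ {a}) =
          adjoin k (((insert a S : Finset K) : Set K) ∪ (F : Set K)) := by
        rw [hB0, adjoin_coe_union]
        congr 1
        ext x
        simp only [Set.mem_union, Set.mem_singleton_iff, Finset.coe_insert, Set.mem_insert_iff,
          SetLike.mem_coe, Finset.mem_coe]
        tauto
      have hle2 : B0 ≤ adjoin k ((B0 : Set K) ∪ {a}) := fun x hx => subset_adjoin _ _ (Or.inl hx)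
      rw [← hBeq, ← relfinrank_mul_relfinrank hFB0 hle2, hic, hstep,
        Finset.card_insert_of_notMem ha, pow_succ]

lemma fd_of_le (B E : IntermediateField k K) (hBE : B ≤ E) [FiniteDimensional k E] :
    FiniteDimensional k B := by
  haveI : FiniteDimensional k E.toSubmodule := ‹FiniteDimensional k E›
  have := Submodule.finiteDimensional_of_le (S₁ := B.toSubmodule) (S₂ := E.toSubmodule) hBE
  exact this

lemma relfinrank_pos (A B E : IntermediateField k K) (hAB : A ≤ B) (hBE : B ≤ E)
    [FiniteDimensional k E] : 0 < relfinrank A B := by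
  rw [relfinrank_eq_finrank_of_le hAB]
  haveI : FiniteDimensional k B := fd_of_le B E hBE
  haveI : FiniteDimensional (↥A) (extendScalars hAB) := by
    have : FiniteDimensional k (extendScalars hAB) := ‹FiniteDimensional k B›
    exact FiniteDimensional.right k (↥A) (extendScalars hAB)
  exact Module.finrank_pos

lemma bounded_card (hp : p.Prime) [CharP K p] (F E : IntermediateField k K) (hFE : F ≤ E)
    [FiniteDimensional k E] (S : Finset K) (hSE : (S : Set K) ⊆ (E : Set K))
    (hSp : ∀ x ∈ S, x ^ p ∈ F)
    (hind : ∀ x ∈ S, x ∉ adjoin k (((S : Set K) \ {x}) ∪ (F : Set K))) :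
    p ^ S.card ≤ Module.finrank k E := by
  have hchain := chain hp F S hSp hind
  set B := adjoin k ((S : Set K) ∪ (F : Set K)) with hBdef
  have hFB : F ≤ B := fun x hx => subset_adjoin _ _ (Or.inr hx)
  have hBE : B ≤ E := adjoin_le_iff.mpr (Set.union_subset hSE hFE)
  have h1 : relfinrank F B * relfinrank B E = relfinrank F E :=
    relfinrank_mul_relfinrank hFB hBE
  have h2 : relfinrank ⊥ F * relfinrank F E = relfinrank ⊥ E :=
    relfinrank_mul_relfinrank bot_le hFE
  have h3 : relfinrank ⊥ E = Module.finrank k E := relfinrank_bot_left E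
  have hp1 : 0 < relfinrank B E := relfinrank_pos B E E hBE le_rfl
  have hp2 : 0 < relfinrank ⊥ F := relfinrank_pos ⊥ F E bot_le hFE
  calc p ^ S.card = relfinrank F B := hchain.symm
    _ ≤ relfinrank ⊥ F * (relfinrank F B * relfinrank B E) := by
        nlinarith [hchain ▸ pow_pos hp.pos S.card]
    _ = Module.finrank k E := by rw [h1, h2, h3]

lemma pind_set_finite (hp : p.Prime) [CharP K p] (F E : IntermediateField k K) (hFE : F ≤ E)
    [FiniteDimensional k E] (BS : Set K) (hSE : BS ⊆ (E : Set K))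
    (hSp : ∀ x ∈ BS, x ^ p ∈ F)
    (hind : ∀ x ∈ BS, x ∉ adjoin k ((BS \ {x}) ∪ (F : Set K))) :
    BS.Finite := by
  by_contra hinf
  obtain ⟨T, hTsub, hTcard⟩ :=
    (Set.Infinite.exists_subset_card_eq hinf (Module.finrank k E))
  have hb := bounded_card hp F E hFE T (hTsub.trans hSE) (fun x hx => hSp x (hTsub hx))
    (fun x hx hmem => hind x (hTsub hx) ((adjoin.mono _ _ _ (Set.union_subset_union_left _
      (Set.diff_subset_diff_left hTsub))) hmem))
  rw [hTcard] at hb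
  have h2 : Module.finrank k E < 2 ^ Module.finrank k E := Nat.lt_two_pow_self
  have h3 : (2:ℕ) ^ Module.finrank k E ≤ p ^ Module.finrank k E :=
    Nat.pow_le_pow_left hp.two_le _
  omega

/-- `k(E^p)`. -/
noncomputable def padj (p : ℕ) (E : IntermediateField k K) : IntermediateField k K :=
  adjoin k ((· ^ p) '' (E : Set K))

lemma padj_le (E : IntermediateField k K) : padj p E ≤ E := by
  rw [padj, adjoin_le_iff]
  rintro _ ⟨y, hy, rfl⟩
  exact pow_mem hy p

lemma padj_mono {E E' : IntermediateField k K} (h : E ≤ E') : padj p E ≤ padj p E' :=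
  adjoin.mono _ _ _ (Set.image_mono h)

lemma mem_padj_of_mem {E : IntermediateField k K} {x : K} (hx : x ∈ E) : x ^ p ∈ padj p E :=
  subset_adjoin _ _ ⟨x, hx, rfl⟩

lemma padj_adjoin_simple (hp : p.Prime) [CharP K p] (M : IntermediateField k K) (u : K) :
    padj p (adjoin k ((M : Set K) ∪ {u})) = adjoin k ((padj p M : Set K) ∪ {u ^ p}) := by
  apply le_antisymm
  · rw [padj, adjoin_le_iff]
    rintro _ ⟨y, hy, rfl⟩
    have h1 := pow_mem_adjoin_pow hp _ hy
    refine SetLike.le_def.mp ?_ h1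
    rw [adjoin_le_iff, Set.image_union, Set.image_singleton]
    apply Set.union_subset
    · intro z hz
      exact subset_adjoin _ _ (Or.inl (subset_adjoin _ _ hz))
    · intro z hz
      exact subset_adjoin _ _ (Or.inr hz)
  · rw [adjoin_le_iff]
    apply Set.union_subset
    · exact SetLike.coe_subset_coe.mpr
        (padj_mono (fun x hx => subset_adjoin _ _ (Or.inl hx)))
    · intro z hz
      rw [Set.mem_singleton_iff] at hz
      subst hz
      exact mem_padj_of_mem (subset_adjoin _ _ (Or.inr rfl))

lemma step_ineq (hp : p.Prime) [CharP K p] (M : IntermediateField k K) {u : K}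
    (hu : u ^ p ∈ M) :
    relfinrank (padj p M) M ≤
      relfinrank (padj p (adjoin k ((M : Set K) ∪ {u}))) (adjoin k ((M : Set K) ∪ {u})) := by
  set M' := adjoin k ((M : Set K) ∪ {u}) with hM'def
  have hMM' : M ≤ M' := fun x hx => subset_adjoin _ _ (Or.inl hx)
  have hpM : padj p M ≤ M := padj_le M
  have hpM' : padj p M' ≤ M' := padj_le M'
  have hpp : padj p M ≤ padj p M' := padj_mono hMM'
  by_cases hum : u ∈ M
  · have hMeq : M' = M := le_antisymm
      (adjoin_le_iff.mpr (Set.union_subset le_rfl (Set.singleton_subset_iff.mpr hum))) hMM'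
    rw [hMeq]
  · have hrelMM' : relfinrank M M' = p := relfinrank_adjoin_simple hp M hum hu
    have e1 : relfinrank (padj p M) (padj p M') * relfinrank (padj p M') M' =
        relfinrank (padj p M) M' := relfinrank_mul_relfinrank hpp hpM'
    have e2 : relfinrank (padj p M) M * relfinrank M M' = relfinrank (padj p M) M' :=
      relfinrank_mul_relfinrank hpM hMM'
    have hpadj : padj p M' = adjoin k ((padj p M : Set K) ∪ {u ^ p}) :=
      padj_adjoin_simple hp M u
    have ha : relfinrank (padj p M) (padj p M') ≤ p := by
      by_cases hc : u ^ p ∈ padj p M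
      · have heq : padj p M' = padj p M := by
          rw [hpadj]
          exact le_antisymm
            (adjoin_le_iff.mpr (Set.union_subset le_rfl (Set.singleton_subset_iff.mpr hc)))
            (fun x hx => subset_adjoin _ _ (Or.inl hx))
        rw [heq, relfinrank_self]
        exact hp.one_lt.le
      · have hupp : (u ^ p) ^ p ∈ padj p M := mem_padj_of_mem hu
        rw [hpadj, relfinrank_adjoin_simple hp (padj p M) hc hupp]
    have key : relfinrank (padj p M) M * p ≤ p * relfinrank (padj p M') M' := by
      calc relfinrank (padj p M) M * p
          = relfinrank (padj p M) (padj p M') * relfinrank (padj p M') M' := by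
            rw [e1, ← e2, hrelMM']
        _ ≤ p * relfinrank (padj p M') M' :=
            Nat.mul_le_mul_right _ ha
    rw [Nat.mul_comm] at key
    exact Nat.le_of_mul_le_mul_left key hp.pos

lemma tower_ineq (hp : p.Prime) [CharP K p] [FiniteDimensional k K] {e : ℕ}
    (he : ∀ x : K, x ^ p ^ e ∈ (⊥ : IntermediateField k K)) (L : IntermediateField k K) :
    relfinrank (padj p L) L ≤ relfinrank (padj p ⊤) (⊤ : IntermediateField k K) := by
  classical
  suffices H : ∀ n (M : IntermediateField k K),
      Module.finrank k K - Module.finrank k M ≤ n →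
      relfinrank (padj p M) M ≤ relfinrank (padj p ⊤) (⊤ : IntermediateField k K) from
    H _ L le_rfl
  intro n
  induction n with
  | zero =>
      intro M hM
      have h1 : Module.finrank k M ≤ Module.finrank k K := M.toSubmodule.finrank_le
      have h2 : Module.finrank k (⊤ : IntermediateField k K) ≤ Module.finrank k M := by
        rw [IntermediateField.finrank_top']
        omega
      have : M = ⊤ := eq_of_le_of_finrank_le le_top h2
      rw [this]
  | succ n ih =>
      intro M hM
      by_cases hMtop : M = ⊤
      · rw [hMtop]
      · obtain ⟨x, -, hx⟩ := SetLike.exists_of_lt (lt_of_le_of_ne le_top hMtop)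
        have hPe : ∃ j, x ^ p ^ j ∈ M := ⟨e, SetLike.le_def.mp bot_le (he x)⟩
        set j := Nat.find hPe with hjdef
        have hj : x ^ p ^ j ∈ M := Nat.find_spec hPe
        have hj0 : j ≠ 0 := by
          intro h0
          rw [h0, pow_zero, pow_one] at hj
          exact hx hj
        set u := x ^ p ^ (j - 1) with hudef
        have hu1 : u ∉ M := Nat.find_min hPe (by omega)
        have hu2 : u ^ p ∈ M := by
          rw [hudef, ← pow_mul, ← pow_succ]
          have hj1 : j - 1 + 1 = j := by omega
          rw [hj1]
          exact hj
        set M' := adjoin k ((M : Set K) ∪ {u}) with hM'def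
        have hMM' : M ≤ M' := fun y hy => subset_adjoin _ _ (Or.inl hy)
        have huM' : u ∈ M' := subset_adjoin _ _ (Or.inr rfl)
        have hlt : Module.finrank k M < Module.finrank k M' := by
          have hsub : M.toSubmodule < M'.toSubmodule := by
            apply lt_of_le_of_ne
            · exact fun y hy => hMM' hy
            · intro h
              apply hu1
              have hmem : u ∈ M'.toSubmodule := huM'
              rw [← h] at hmem
              exact hmem
          exact Submodule.finrank_lt_finrank_of_lt hsub
        refine le_trans (step_ineq hp M hu2) (ih M' ?_)
        omega

lemma adjoin_union_padj (S : Set K) (E : IntermediateField k K) :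
    adjoin k (S ∪ ↑(padj p E)) = adjoin k (S ∪ (· ^ p) '' (E : Set K)) :=
  adjoin_union_coe _ _

/-- The generating property in terms of `padj`. -/
lemma gen_eq (E : IntermediateField k K) (B : Set K) (hBE : B ⊆ (E : Set K))
    (hgen : adjoin k B = E) : adjoin k (B ∪ ↑(padj p E)) = E := by
  apply le_antisymm
  · exact adjoin_le_iff.mpr (Set.union_subset hBE (padj_le E))
  · rw [← hgen]
    exact adjoin.mono _ _ _ Set.subset_union_left

end RB

/-- If `k ⊆ L ⊆ K` with `K/k` purely inseparable of finite exponent,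
`B_L` an r-basis of `L/k` and `B_K` an r-basis of `K/k`, then `|B_L| ≤ |B_K|`. -/
theorem stmt_5 (hp : p.Prime) [CharP K p] [IsPurelyInseparable k K]
    (e : ℕ) (he : ∀ x : K, x ^ p ^ e ∈ (⊥ : IntermediateField k K))
    (L : IntermediateField k K) (BL BK : Set K)
    (hL : IsRBasisOf k K L BL) (hK : IsRBasisOf k K ⊤ BK) :
    Cardinal.mk ↥BL ≤ Cardinal.mk ↥BK := by
  classical
  obtain ⟨hL1, hL2, hL3⟩ := hL
  obtain ⟨hK1, hK2, hK3⟩ := hK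
  -- every element of `K` is integral over `k`
  have hint : ∀ x : K, IsIntegral k x := by
    intro x
    obtain ⟨c, hc⟩ := (IntermediateField.mem_bot).mp (he x)
    refine ⟨Polynomial.X ^ p ^ e - Polynomial.C c,
      Polynomial.monic_X_pow_sub_C _ (pow_ne_zero e hp.ne_zero), ?_⟩
    simp [Polynomial.eval₂_sub, hc]
  -- relative p-independence of the two r-bases
  have hindL := RB.rbasis_pind hp he hL1 hL2 hL3
  have hindK := RB.rbasis_pind hp he hK1 hK2 hK3
  by_cases hKfin : BK.Finite
  · -- finite case
    haveI : Finite ↥BK := hKfin.to_subtype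
    have hfdadj : FiniteDimensional k (adjoin k BK) :=
      IntermediateField.finiteDimensional_adjoin (fun x _ => hint x)
    haveI : FiniteDimensional k K := by
      rw [hK2] at hfdadj
      exact (IntermediateField.topEquiv (F := k) (E := K)).toLinearEquiv.finiteDimensional
    -- BL is finite
    have hLfin : BL.Finite := by
      refine RB.pind_set_finite hp (RB.padj p L) L (RB.padj_le L) BL hL1
        (fun x hx => RB.mem_padj_of_mem (hL1 hx)) ?_
      intro x hx hmem
      refine hindL x hx ?_
      rw [RB.adjoin_union_padj] at hmem
      exact hmem
    set SL := hLfin.toFinset with hSLdef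
    set SK := hKfin.toFinset with hSKdef
    have hSLcoe : (SL : Set K) = BL := hLfin.coe_toFinset
    have hSKcoe : (SK : Set K) = BK := hKfin.coe_toFinset
    -- the two chain computations
    have hchainL : relfinrank (RB.padj p L) L = p ^ SL.card := by
      have hc := RB.chain hp (RB.padj p L) SL
        (fun x hx => RB.mem_padj_of_mem (hL1 (hSLcoe ▸ hx)))
        (by
          intro x hx hmem
          refine hindL x (hSLcoe ▸ hx) ?_
          rw [RB.adjoin_union_padj, hSLcoe] at hmem
          exact hmem)
      rw [hSLcoe] at hc
      rwa [RB.gen_eq L BL hL1 hL2] at hc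
    have hchainK : relfinrank (RB.padj p ⊤) (⊤ : IntermediateField k K) = p ^ SK.card := by
      have hc := RB.chain hp (RB.padj p ⊤) SK
        (fun x hx => RB.mem_padj_of_mem (hK1 (hSKcoe ▸ hx)))
        (by
          intro x hx hmem
          refine hindK x (hSKcoe ▸ hx) ?_
          rw [RB.adjoin_union_padj, hSKcoe] at hmem
          exact hmem)
      rw [hSKcoe] at hc
      rwa [RB.gen_eq ⊤ BK hK1 hK2] at hc
    have htower := RB.tower_ineq hp he L
    rw [hchainL, hchainK] at htower
    have hcard : SL.card ≤ SK.card := (Nat.pow_le_pow_iff_right hp.one_lt).mp htower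
    have hmkL : Cardinal.mk ↥BL = SL.card := by
      rw [← hSLcoe, Finset.coe_sort_coe, Cardinal.mk_coe_finset]
    have hmkK : Cardinal.mk ↥BK = SK.card := by
      rw [← hSKcoe, Finset.coe_sort_coe, Cardinal.mk_coe_finset]
    rw [hmkL, hmkK]
    exact_mod_cast hcard
  · -- infinite case
    have hKinf : BK.Infinite := hKfin
    haveI : Infinite ↥BK := hKinf.to_subtype
    have hchoice : ∀ x : ↥BL, ∃ T : Finset K,
        (T : Set K) ⊆ BK ∧ (x : K) ∈ adjoin k (T : Set K) := by
      intro x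
      have hxK : (x : K) ∈ adjoin k BK := by rw [hK2]; trivial
      exact exists_finset_of_mem_adjoin hxK
    choose f hf1 hf2 using hchoice
    set g : ↥BL → Finset ↥BK := fun x => (f x).subtype (· ∈ BK) with hgdef
    have hgf : ∀ x : ↥BL, (g x).map (Function.Embedding.subtype (· ∈ BK)) = f x := by
      intro x
      exact Finset.subtype_map_of_mem (fun y hy => hf1 x hy)
    have hfib : ∀ T : Finset ↥BK, {x : ↥BL | g x = T}.Finite := by
      intro T
      rcases Set.eq_empty_or_nonempty {x : ↥BL | g x = T} with hemp | ⟨x0, hx0⟩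
      · rw [hemp]; exact Set.finite_empty
      · set E0 := adjoin k ((f x0 : Set K)) ⊓ L with hE0
        haveI : FiniteDimensional k (adjoin k ((f x0 : Set K))) :=
          IntermediateField.finiteDimensional_adjoin (fun x _ => hint x)
        haveI : FiniteDimensional k E0 := RB.fd_of_le E0 _ inf_le_left
        have hE0L : E0 ≤ L := inf_le_right
        have hBSfin : (BL ∩ (E0 : Set K)).Finite := by
          refine RB.pind_set_finite hp (RB.padj p E0) E0 (RB.padj_le E0) _
            Set.inter_subset_right ?_ ?_
          · intro x hx
            exact RB.mem_padj_of_mem hx.2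
          · intro x hx hmem
            refine hindL x hx.1 ?_
            rw [RB.adjoin_union_padj] at hmem
            refine SetLike.le_def.mp ?_ hmem
            rw [adjoin_le_iff]
            apply Set.union_subset
            · intro y hy
              exact subset_adjoin _ _
                (Or.inl (Set.diff_subset_diff_left Set.inter_subset_left hy))
            · rintro _ ⟨y, hy, rfl⟩
              exact subset_adjoin _ _ (Or.inr ⟨y, hE0L hy, rfl⟩)
        refine Set.Finite.subset
          (hBSfin.preimage Subtype.val_injective.injOn) ?_
        intro x hx
        have hfeq : f x = f x0 := by
          rw [← hgf x, ← hgf x0, hx, hx0]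
        refine ⟨x.2, ?_⟩
        show (x : K) ∈ E0
        rw [hE0]
        refine ⟨?_, hL1 x.2⟩
        rw [← hfeq]
        exact hf2 x
    have hcover : (Set.univ : Set ↥BL) = ⋃ T : Finset ↥BK, {x : ↥BL | g x = T} := by
      ext x
      simp
    have h1 : Cardinal.mk ↥BL ≤
        Cardinal.sum (fun T : Finset ↥BK => Cardinal.mk {x : ↥BL | g x = T}) := by
      have hmk := Cardinal.mk_iUnion_le_sum_mk
        (f := fun T : Finset ↥BK => {x : ↥BL | g x = T})
      rwa [← hcover, Cardinal.mk_univ] at hmk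
    have h2 : Cardinal.sum (fun T : Finset ↥BK => Cardinal.mk {x : ↥BL | g x = T}) ≤
        Cardinal.sum (fun _ : Finset ↥BK => (Cardinal.aleph0 : Cardinal)) := by
      apply Cardinal.sum_le_sum
      intro T
      haveI := (hfib T).to_subtype
      exact (Cardinal.lt_aleph0_of_finite _).le
    have h3 : Cardinal.sum (fun _ : Finset ↥BK => (Cardinal.aleph0 : Cardinal)) =
        Cardinal.mk (Finset ↥BK) * Cardinal.aleph0 := Cardinal.sum_const' _ _
    have h4 : Cardinal.mk (Finset ↥BK) = Cardinal.mk ↥BK :=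
      Cardinal.mk_finset_of_infinite _
    have h5 : Cardinal.mk ↥BK * Cardinal.aleph0 = Cardinal.mk ↥BK :=
      Cardinal.mul_eq_left (Cardinal.aleph0_le_mk _) (Cardinal.aleph0_le_mk _)
        Cardinal.aleph0_ne_zero
    calc Cardinal.mk ↥BL ≤ _ := h1
      _ ≤ _ := h2
      _ = _ := h3
      _ = Cardinal.mk ↥BK := by rw [h4, h5]
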